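/- Let (V, ⟨·,·⟩) be a finite-dimensional real inner product space equipped with an orthogonal complex structure J, and let π be a representation of a group G on V by ℝ-linear maps that preserve the inner product and commute with J. Assume π is complex-irreducible, i.e. the only subspaces of V invariant under both J and every π(g) are {0} and V. Then for every π-invariant subspace W of V with W ≠ {0} and W ≠ V, the subspaces W and JW are orthogonal: ⟨v, Jw⟩ = 0 for all v, w ∈ W. -/

import Mathlib

open scoped RealInnerProductSpace

/-- For a complex-irreducible unitary representation commuting with an orthogonal
complex structure `J`, any proper nonzero invariant subspace `W` is orthogonal
to `JW`. -/
theorem invariant_subspace_orthogonal_J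
    {V : Type*} [NormedAddCommGroup V] [InnerProductSpace ℝ V]
    [FiniteDimensional ℝ V]
    (J : V →ₗ[ℝ] V)
    (hJ2 : ∀ v, J (J v) = -v)
    (hJorth : ∀ x y : V, ⟪J x, J y⟫ = ⟪x, y⟫)
    {G : Type*} [Group G] (π : Representation ℝ G V)
    (hπorth : ∀ (g : G) (x y : V), ⟪π g x, π g y⟫ = ⟪x, y⟫)
    (hπJ : ∀ (g : G) (v : V), π g (J v) = J (π g v))
    (hirr : ∀ W : Submodule ℝ V, (∀ v ∈ W, J v ∈ W) →
      (∀ (g : G), ∀ v ∈ W, π g v ∈ W) → W = ⊥ ∨ W = ⊤) :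
    ∀ W : Submodule ℝ V, (∀ (g : G), ∀ v ∈ W, π g v ∈ W) →
      W ≠ ⊥ → W ≠ ⊤ →
      ∀ v ∈ W, ∀ w ∈ W, ⟪v, J w⟫ = 0 := by
  intro W hWπ hWbot hWtop v hv w hw
  -- basic facts about J
  have hJneg : ∀ a b : V, ⟪J a, b⟫ = -⟪a, J b⟫ := by
    intro a b
    have : ⟪J a, b⟫ = ⟪J a, -(J (J b))⟫ := by rw [hJ2]; simp
    rw [this, inner_neg_right, hJorth]
  -- the orthogonal projection onto W as an endomorphism of V
  set P : V →ₗ[ℝ] V := W.subtype.comp W.orthogonalProjectionOnto.toLinearMap with hPdef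
  have hPx : ∀ x : V, P x = (W.orthogonalProjectionOnto x : V) := fun _ => rfl
  have hPmem : ∀ x : V, P x ∈ W := fun x => (W.orthogonalProjectionOnto x).2
  have hPid : ∀ x ∈ W, P x = x := by
    intro x hx
    rw [hPx]
    exact (Submodule.starProjection_eq_self_iff (K := W)).mpr hx
  have hPsymm : ∀ x y : V, ⟪P x, y⟫ = ⟪x, P y⟫ := by
    intro x y
    rw [hPx, hPx]
    exact Submodule.inner_starProjection_left_eq_right (K := W) x y
  -- π g inverse facts
  have hπinv : ∀ (g : G) (u : V), π g (π g⁻¹ u) = u := by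
    intro g u
    have : π g * π g⁻¹ = 1 := by rw [← map_mul, mul_inv_cancel, map_one]
    calc π g (π g⁻¹ u) = (π g * π g⁻¹) u := rfl
      _ = u := by rw [this]; rfl
  -- P commutes with π g
  have hPcomm : ∀ (g : G) (x : V), P (π g x) = π g (P x) := by
    intro g x
    rw [hPx]
    apply Submodule.eq_starProjection_of_mem_of_inner_eq_zero
    · exact hWπ g _ (hPmem x)
    · intro u hu
      have h1 : π g x - π g (P x) = π g (x - P x) := by rw [map_sub]
      rw [h1]
      have h2 : u = π g (π g⁻¹ u) := (hπinv g u).symm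
      rw [h2, hπorth]
      have h3 : π g⁻¹ u ∈ W := hWπ g⁻¹ u hu
      rw [hPx]
      exact Submodule.starProjection_inner_eq_zero (K := W) x _ h3
  -- the operator A = P - J P J
  set A : V →ₗ[ℝ] V := P - J ∘ₗ P ∘ₗ J with hAdef
  have hAx : ∀ x : V, A x = P x - J (P (J x)) := fun x => rfl
  -- A is symmetric
  have hAsym : A.IsSymmetric := by
    intro x y
    rw [hAx, hAx, inner_sub_left, inner_sub_right]
    congr 1
    · exact hPsymm x y
    · rw [hJneg, hPsymm, hJneg, neg_neg]
  -- A commutes with J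
  have hAJ : ∀ x : V, A (J x) = J (A x) := by
    intro x
    rw [hAx, hAx, map_sub, hJ2, map_neg, map_neg, hJ2]
    abel
  -- A commutes with π g
  have hAπ : ∀ (g : G) (x : V), A (π g x) = π g (A x) := by
    intro g x
    rw [hAx, hAx, map_sub, hPcomm, ← hπJ, hPcomm, hπJ]
  -- eigenspaces of A are J- and π-invariant, hence ⊥ or ⊤
  have heig : ∀ μ : ℝ, Module.End.eigenspace A μ = ⊥ ∨ Module.End.eigenspace A μ = ⊤ := by
    intro μ
    apply hirr
    · intro x hx
      rw [Module.End.mem_eigenspace_iff] at hx ⊢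
      rw [hAJ, hx, map_smul]
    · intro g x hx
      rw [Module.End.mem_eigenspace_iff] at hx ⊢
      rw [hAπ, hx, map_smul]
  -- eigenspaces span V
  have hspan : (⨆ μ, Module.End.eigenspace A μ) = ⊤ := by
    have := hAsym.orthogonalComplement_iSup_eigenspaces_eq_bot
    rwa [Submodule.orthogonal_eq_bot_iff] at this
  -- some eigenspace is ⊤
  have hexists : ∃ μ : ℝ, Module.End.eigenspace A μ = ⊤ := by
    by_contra h
    push_neg at h
    have hall : ∀ μ : ℝ, Module.End.eigenspace A μ = ⊥ := fun μ =>
      (heig μ).resolve_right (h μ)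
    have : (⨆ μ, Module.End.eigenspace A μ) = (⊥ : Submodule ℝ V) := by
      simp [hall]
    rw [hspan] at this
    apply hWbot
    rw [← le_bot_iff, ← this]
    exact le_top
  obtain ⟨μ, hμ⟩ := hexists
  have hAeq : ∀ x : V, A x = μ • x := by
    intro x
    have : x ∈ Module.End.eigenspace A μ := by rw [hμ]; trivial
    exact Module.End.mem_eigenspace_iff.mp this
  -- for w' ∈ W : P (J w') = (μ - 1) • J w'
  have hkey : ∀ w' ∈ W, P (J w') = (μ - 1) • J w' := by
    intro w' hw'
    have h1 : P w' - J (P (J w')) = μ • w' := by rw [← hAx]; exact hAeq w'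
    rw [hPid w' hw'] at h1
    have h2 : J (P (J w')) = (1 - μ) • w' := by
      rw [sub_smul, one_smul, ← h1]; abel
    have h3 : J (J (P (J w'))) = (1 - μ) • J w' := by rw [h2, map_smul]
    rw [hJ2] at h3
    have : P (J w') = -((1 - μ) • J w') := by rw [← h3, neg_neg]
    rw [this, ← neg_smul]
    congr 1
    ring
  -- μ must equal 1, otherwise W is J-invariant
  have hμ1 : μ = 1 := by
    by_contra hne
    have hJW : ∀ x ∈ W, J x ∈ W := by
      intro x hx
      have h1 := hkey x hx
      have h2 : J x = (μ - 1)⁻¹ • P (J x) := by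
        rw [h1, smul_smul, inv_mul_cancel₀ (by intro h; apply hne; linarith [sub_eq_zero.mp h]),
          one_smul]
      rw [h2]
      exact W.smul_mem _ (hPmem _)
    rcases hirr W hJW hWπ with h | h
    · exact hWbot h
    · exact hWtop h
  -- conclude
  have hP0 : P (J w) = 0 := by
    rw [hkey w hw, hμ1]
    simp
  calc ⟪v, J w⟫ = ⟪P v, J w⟫ := by rw [hPid v hv]
    _ = ⟪v, P (J w)⟫ := hPsymm v (J w)
    _ = 0 := by rw [hP0, inner_zero_right]
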